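/- Fix δ_L > 0 and 0 < δ_R < 1. For every τ_L ≥ δ_L + 1 there exists a unique τ_R < -δ_R - 1 such that ψ̂(τ_L, δ_L, τ_R, δ_R) = 0. Writing this value as H(τ_L), the function H : [δ_L + 1, ∞) → (-∞, -δ_R - 1) is strictly increasing, H(τ_L) → -δ_R - 1 as τ_L → +∞, and H(δ_L + 1) = β + δ_R/β where β is the smallest real root of the cubic p(β) = (1 + δ_L)·β³ + (1 - δ_L - δ_R)·β² - (1 + δ_L)·β + δ_L. -/

import Mathlib

noncomputable section

/-- The unstable eigenvalue `λ_R^u` of `A_R`. -/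
def lamRu (ξ : ℝ × ℝ × ℝ × ℝ) : ℝ := (ξ.2.2.1 - Real.sqrt (ξ.2.2.1 ^ 2 - 4 * ξ.2.2.2)) / 2

/-- The stable eigenvalue `λ_R^s` of `A_R`. -/
def lamRs (ξ : ℝ × ℝ × ℝ × ℝ) : ℝ := (ξ.2.2.1 + Real.sqrt (ξ.2.2.1 ^ 2 - 4 * ξ.2.2.2)) / 2

/-- The function `ψ̂(ξ) = -δ_L((λ_R^u)² - 1) + λ_R^u((λ_R^u)² - 1)τ_L + (1 - δ_R)(λ_R^u)²`. -/
def psiHat (ξ : ℝ × ℝ × ℝ × ℝ) : ℝ :=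
  -ξ.2.1 * ((lamRu ξ) ^ 2 - 1) + lamRu ξ * ((lamRu ξ) ^ 2 - 1) * ξ.1
    + (1 - ξ.2.2.2) * (lamRu ξ) ^ 2

/-- The cubic whose root below `-1` is the unstable eigenvalue. -/
def fc (dL dR tL x : ℝ) : ℝ := tL * x ^ 3 + (1 - dR - dL) * x ^ 2 - tL * x + dL

lemma fc_lt {dL dR tL a b : ℝ} (h0 : 0 < dL) (h1 : 0 < dR) (htL : dL + 1 ≤ tL)
    (hab : a < b) (hb : b ≤ -1) : fc dL dR tL a < fc dL dR tL b := by
  have ha : a < -1 := lt_of_lt_of_le hab hb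
  have habpos : (0:ℝ) < (-a) * (-b) :=
    mul_pos (show (0:ℝ) < -a by linarith) (show (0:ℝ) < -b by linarith)
  have hX : (0:ℝ) ≤ a ^ 2 + a * b + b ^ 2 - 1 := by nlinarith
  have hkey : 0 < tL * (a ^ 2 + a * b + b ^ 2 - 1) + (1 - dR - dL) * (a + b) := by
    nlinarith [mul_pos (show (0:ℝ) < -a - 1 by linarith) (show (0:ℝ) < -b by linarith),
      habpos,
      mul_pos (show (0:ℝ) < dR + dL by linarith) (show (0:ℝ) < -(a + b) by linarith),
      mul_nonneg (show (0:ℝ) ≤ tL - 1 by linarith) hX]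
  have hexp : fc dL dR tL b - fc dL dR tL a
      = (b - a) * (tL * (a ^ 2 + a * b + b ^ 2 - 1) + (1 - dR - dL) * (a + b)) := by
    unfold fc; ring
  nlinarith [mul_pos (show (0:ℝ) < b - a by linarith) hkey]

lemma fc_inj {dL dR tL a b : ℝ} (h0 : 0 < dL) (h1 : 0 < dR) (htL : dL + 1 ≤ tL)
    (ha : a ≤ -1) (hb : b ≤ -1) (hfe : fc dL dR tL a = fc dL dR tL b) : a = b := by
  rcases lt_trichotomy a b with h | h | h
  · exact absurd hfe (ne_of_lt (fc_lt h0 h1 htL h hb))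
  · exact h
  · exact absurd hfe.symm (ne_of_lt (fc_lt h0 h1 htL h ha))

lemma fc_root {dL dR tL : ℝ} (h0 : 0 < dL) (h1 : 0 < dR) (h2 : dR < 1)
    (htL : dL + 1 ≤ tL) : ∃ l, l < -1 ∧ fc dL dR tL l = 0 := by
  set M : ℝ := dL + 3 with hM
  have hM3 : (3:ℝ) ≤ M := by rw [hM]; linarith
  have hMle : -M ≤ -1 := by linarith
  have htL1 : (1:ℝ) ≤ tL := by linarith
  have hcont : ContinuousOn (fc dL dR tL) (Set.Icc (-M) (-1)) := by
    apply Continuous.continuousOn; unfold fc; continuity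
  have hneg : fc dL dR tL (-M) ≤ 0 := by
    unfold fc
    nlinarith [mul_nonneg (mul_nonneg (show (0:ℝ) ≤ tL by linarith) (sq_nonneg M))
        (show (0:ℝ) ≤ M - 3 by linarith),
      mul_nonneg (show (0:ℝ) ≤ tL - 1 by linarith) (sq_nonneg M),
      mul_nonneg (mul_nonneg (show (0:ℝ) ≤ tL by linarith) (show (0:ℝ) ≤ M by linarith))
        (show (0:ℝ) ≤ M - 1 by linarith),
      mul_nonneg (show (0:ℝ) ≤ tL - 1 by linarith) (show (0:ℝ) ≤ M by linarith),
      mul_nonneg (show (0:ℝ) ≤ M by linarith) (show (0:ℝ) ≤ M - 1 by linarith),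
      mul_nonneg (mul_nonneg (show (0:ℝ) ≤ dR + dL by linarith) (show (0:ℝ) ≤ M by linarith))
        (show (0:ℝ) ≤ M by linarith)]
  have hpos : fc dL dR tL (-1) = 1 - dR := by unfold fc; ring
  have h0mem : (0:ℝ) ∈ Set.Icc (fc dL dR tL (-M)) (fc dL dR tL (-1)) :=
    ⟨hneg, by rw [hpos]; linarith⟩
  obtain ⟨l, hl, hfl⟩ := intermediate_value_Icc hMle hcont h0mem
  refine ⟨l, ?_, hfl⟩
  rcases lt_or_eq_of_le hl.2 with h | h
  · exact h
  · exfalso; rw [h, hpos] at hfl; linarith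

lemma tau_lt {dR l : ℝ} (h1 : 0 < dR) (h2 : dR < 1) (hl : l < -1) :
    l + dR / l < -dR - 1 := by
  have hl0 : l < 0 := by linarith
  have hl0' : l ≠ 0 := ne_of_lt hl0
  have key : l + dR / l - (-dR - 1) = (l + 1) * (l + dR) / l := by
    field_simp
    ring
  have hnum : 0 < (l + 1) * (l + dR) := mul_pos_of_neg_of_neg (by linarith) (by linarith)
  have := div_neg_of_pos_of_neg hnum hl0
  linarith

lemma tau_mono {dR a b : ℝ} (h1 : 0 < dR) (h2 : dR < 1) (hab : a < b) (hb : b < -1) :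
    a + dR / a < b + dR / b := by
  have ha : a < -1 := lt_trans hab hb
  have ha0 : a < 0 := by linarith
  have hb0 : b < 0 := by linarith
  have ha0' : a ≠ 0 := ne_of_lt ha0
  have hb0' : b ≠ 0 := ne_of_lt hb0
  have key : (b + dR / b) - (a + dR / a) = (b - a) * (a * b - dR) / (a * b) := by
    field_simp
    ring
  have hab0 : 0 < a * b := mul_pos_of_neg_of_neg ha0 hb0
  have h3 : 0 < (b - a) * (a * b - dR) := by
    have : 1 < a * b := by nlinarith [mul_pos (show (0:ℝ) < -a by linarith) (show (0:ℝ) < -b by linarith)]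
    exact mul_pos (by linarith) (by linarith)
  have := div_pos h3 hab0
  linarith

lemma lamRu_tau {tL dL dR l : ℝ} (h1 : 0 < dR) (h2 : dR < 1) (hl : l < -1) :
    lamRu (tL, dL, l + dR / l, dR) = l := by
  have hl0 : l ≠ 0 := by intro h; rw [h] at hl; linarith
  have hsq : (l + dR / l) ^ 2 - 4 * dR = ((dR - l ^ 2) / l) ^ 2 := by
    field_simp
    ring
  have hpos : 0 ≤ (dR - l ^ 2) / l :=
    le_of_lt (div_pos_of_neg_of_neg (by nlinarith) (by linarith))
  simp only [lamRu]
  rw [hsq, Real.sqrt_sq hpos]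
  field_simp
  ring

lemma lamRu_lt {tL dL dR tR : ℝ} (h1 : 0 < dR) (h2 : dR < 1) (htR : tR < -dR - 1) :
    lamRu (tL, dL, tR, dR) < -1 ∧ tR = lamRu (tL, dL, tR, dR) + dR / lamRu (tL, dL, tR, dR) := by
  have hd0 : (0:ℝ) ≤ tR ^ 2 - 4 * dR := by nlinarith
  have hsq := Real.sq_sqrt hd0
  have hnn := Real.sqrt_nonneg (tR ^ 2 - 4 * dR)
  have hs : 1 - dR < Real.sqrt (tR ^ 2 - 4 * dR) := by nlinarith
  set s := Real.sqrt (tR ^ 2 - 4 * dR) with hsdef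
  have hL : lamRu (tL, dL, tR, dR) = (tR - s) / 2 := by simp [lamRu, hsdef]
  have hlt : (tR - s) / 2 < -1 := by linarith
  have hne : (tR - s) / 2 ≠ 0 := by intro h; rw [h] at hlt; linarith
  refine ⟨by rw [hL]; exact hlt, ?_⟩
  rw [hL]
  have hdiv : dR / ((tR - s) / 2) = (tR + s) / 2 := by
    rw [div_eq_iff hne]
    linear_combination (1/4 : ℝ) * hsq
  rw [hdiv]
  ring

lemma psiHat_eq {tL dL dR tR : ℝ} :
    psiHat (tL, dL, tR, dR) = fc dL dR tL (lamRu (tL, dL, tR, dR)) := by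
  simp only [psiHat, fc]
  ring

/-- Proposition 5.4: for `δ_L > 0` and `0 < δ_R < 1` there is a function `H` on
`[δ_L+1, ∞)` giving the unique `τ_R < -δ_R - 1` with `ψ̂ = 0`; `H` is strictly increasing,
tends to `-δ_R - 1` as `τ_L → ∞`, and `H(δ_L+1) = β + δ_R/β` where `β` is the smallest
real root of `p(β) = (1+δ_L)β³ + (1-δ_L-δ_R)β² - (1+δ_L)β + δ_L`. -/
theorem curve_H (dL dR : ℝ) (h0 : 0 < dL) (h1 : 0 < dR) (h2 : dR < 1)
    (β : ℝ)
    (hβroot : (1 + dL) * β ^ 3 + (1 - dL - dR) * β ^ 2 - (1 + dL) * β + dL = 0)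
    (hβmin : ∀ b : ℝ, (1 + dL) * b ^ 3 + (1 - dL - dR) * b ^ 2 - (1 + dL) * b + dL = 0 →
      β ≤ b) :
    ∃ H : ℝ → ℝ,
      (∀ tL : ℝ, dL + 1 ≤ tL →
        H tL < -dR - 1 ∧ psiHat (tL, dL, H tL, dR) = 0 ∧
          ∀ tR : ℝ, tR < -dR - 1 → psiHat (tL, dL, tR, dR) = 0 → tR = H tL) ∧
      (∀ tL tL' : ℝ, dL + 1 ≤ tL → tL < tL' → H tL < H tL') ∧
      Filter.Tendsto H Filter.atTop (nhds (-dR - 1)) ∧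
      H (dL + 1) = β + dR / β := by
  have hex : ∀ tL : ℝ, dL + 1 ≤ tL → ∃ l, l < -1 ∧ fc dL dR tL l = 0 :=
    fun tL htL => fc_root h0 h1 h2 htL
  choose! L hL1 hL2 using hex
  refine ⟨fun tL => L tL + dR / L tL, ?_, ?_, ?_, ?_⟩
  · -- characterization
    intro tL htL
    have hl1 := hL1 tL htL
    have hl2 := hL2 tL htL
    refine ⟨tau_lt h1 h2 hl1, ?_, ?_⟩
    · rw [psiHat_eq, lamRu_tau h1 h2 hl1]
      exact hl2
    · intro tR htR hpsi
      obtain ⟨hlam, htReq⟩ := lamRu_lt (tL := tL) (dL := dL) h1 h2 htR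
      rw [psiHat_eq] at hpsi
      have heq : lamRu (tL, dL, tR, dR) = L tL :=
        fc_inj h0 h1 htL (le_of_lt hlam) (le_of_lt hl1) (hpsi.trans hl2.symm)
      rw [htReq, heq]
  · -- strict monotonicity
    intro tL tL' htL hlt
    have htL' : dL + 1 ≤ tL' := by linarith
    have hl1 := hL1 tL htL
    have hl2 := hL2 tL htL
    have hl1' := hL1 tL' htL'
    have hl2' := hL2 tL' htL'
    have hneg : fc dL dR tL' (L tL) < 0 := by
      have hexp : fc dL dR tL' (L tL) = fc dL dR tL (L tL)
          + (tL' - tL) * (L tL * ((L tL) ^ 2 - 1)) := by unfold fc; ring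
      have : L tL * ((L tL) ^ 2 - 1) < 0 :=
        mul_neg_of_neg_of_pos (by linarith) (by nlinarith)
      rw [hexp, hl2]
      nlinarith [mul_pos (show (0:ℝ) < tL' - tL by linarith)
        (show (0:ℝ) < -(L tL * ((L tL) ^ 2 - 1)) by linarith)]
    have hmono : L tL < L tL' := by
      by_contra hcon
      push_neg at hcon
      rcases lt_or_eq_of_le hcon with h | h
      · have := fc_lt h0 h1 htL' h (le_of_lt hl1)
        rw [hl2'] at this
        linarith
      · rw [← h] at hneg
        rw [hl2'] at hneg
        linarith
    exact tau_mono h1 h2 hmono hl1'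
  · -- tendsto
    rw [Metric.tendsto_atTop]
    intro ε hε
    set μ : ℝ := -1 - ε / 2 with hμdef
    have hμ : μ < -1 := by rw [hμdef]; linarith
    have hc : μ * (μ ^ 2 - 1) < 0 := mul_neg_of_neg_of_pos (by linarith) (by nlinarith)
    set T : ℝ := ((1 - dR - dL) * μ ^ 2 + dL) / (-(μ * (μ ^ 2 - 1))) with hT
    refine ⟨max (dL + 1) (T + 1), fun tL htL' => ?_⟩
    have htL : dL + 1 ≤ tL := le_trans (le_max_left _ _) htL'
    have htT : T + 1 ≤ tL := le_trans (le_max_right _ _) htL'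
    have hl1 := hL1 tL htL
    have hl2 := hL2 tL htL
    have hfμ : fc dL dR tL μ < 0 := by
      have hmul : tL * (μ * (μ ^ 2 - 1)) ≤ (T + 1) * (μ * (μ ^ 2 - 1)) :=
        mul_le_mul_of_nonpos_right htT (le_of_lt hc)
      have hcne : μ * (μ ^ 2 - 1) ≠ 0 := ne_of_lt hc
      have hTc : T * (μ * (μ ^ 2 - 1)) = -((1 - dR - dL) * μ ^ 2 + dL) := by
        rw [hT]
        field_simp
        rw [show μ * ((1 - dR - dL) * μ ^ 2 + dL) * (μ ^ 2 - 1) = ((1 - dR - dL) * μ ^ 2 + dL) * (μ * (μ ^ 2 - 1)) by ring, mul_div_assoc, div_self hcne]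
        ring
      have hexp : fc dL dR tL μ = tL * (μ * (μ ^ 2 - 1)) + (1 - dR - dL) * μ ^ 2 + dL := by
        unfold fc; ring
      nlinarith
    have hμl : μ < L tL := by
      by_contra hcon
      push_neg at hcon
      rcases lt_or_eq_of_le hcon with h | h
      · have := fc_lt h0 h1 htL h (le_of_lt hμ)
        rw [hl2] at this
        linarith
      · rw [← h] at hfμ; rw [hl2] at hfμ; linarith
    have hup : L tL + dR / L tL < -dR - 1 := tau_lt h1 h2 hl1
    have hlow : μ + dR / μ < L tL + dR / L tL := tau_mono h1 h2 hμl hl1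
    have hμτ : -dR - 1 - ε < μ + dR / μ := by
      have hμ0 : μ < 0 := by linarith
      have h2' : dR < (-dR - 1 - ε - μ) * μ := by rw [hμdef]; nlinarith
      have h3' := (lt_div_iff_of_neg hμ0).mpr h2'
      linarith
    show dist (L tL + dR / L tL) (-dR - 1) < ε
    rw [Real.dist_eq, abs_lt]
    constructor <;> linarith
  · -- value at dL + 1
    have htL : dL + 1 ≤ dL + 1 := le_refl _
    have hl1 := hL1 (dL + 1) htL
    have hl2 := hL2 (dL + 1) htL
    have hβfc : fc dL dR (dL + 1) β = 0 := by
      unfold fc; linear_combination hβroot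
    have hβle : β ≤ L (dL + 1) := by
      apply hβmin
      have := hl2
      unfold fc at this
      linear_combination this
    have hβeq : β = L (dL + 1) :=
      fc_inj h0 h1 htL (by linarith) (le_of_lt hl1) (hβfc.trans hl2.symm)
    show L (dL + 1) + dR / L (dL + 1) = β + dR / β
    rw [← hβeq]

end
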